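/- Let 0 < q < 1 be a real number, let y > 0 be a real number, and let n be a natural number. Then Σ_{k=0}^{n} (-1)^k [n choose k]_q · q^{binom(k+1,2) + n y} · [y]_q / [y+k]_q = q^{n y} · [n]_q! / ( [y+1]_q [y+2]_q ⋯ [y+n]_q ). -/

import Mathlib

/-- The `q`-number of a real `t`: `[t]_q = (1 - q^t)/(1 - q)` (real exponentiation). -/
noncomputable def qnumR (q t : ℝ) : ℝ := (1 - q ^ t) / (1 - q)

/-- The `q`-number `[m]_q = (1 - q^m)/(1 - q)`. -/
noncomputable def qnum (q : ℝ) (m : ℕ) : ℝ := (1 - q ^ m) / (1 - q)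

/-- The `q`-factorial `[n]_q! = [1]_q [2]_q ⋯ [n]_q`. -/
noncomputable def qfact (q : ℝ) (n : ℕ) : ℝ := ∏ i ∈ Finset.range n, qnum q (i + 1)

/-- The `q`-binomial coefficient `[n choose k]_q = [n]_q! / ([k]_q! [n-k]_q!)`. -/
noncomputable def qbinom (q : ℝ) (n k : ℕ) : ℝ := qfact q n / (qfact q k * qfact q (n - k))

section
variable {q x : ℝ}

lemma one_sub_pow_pos (hq0 : 0 < q) (hq1 : q < 1) (m : ℕ) : 0 < 1 - q ^ (m + 1) := by
  have h1 : q ^ (m + 1) < 1 := pow_lt_one₀ hq0.le hq1 (Nat.succ_ne_zero m)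
  linarith

lemma qnum_pos (hq0 : 0 < q) (hq1 : q < 1) (m : ℕ) : 0 < qnum q (m + 1) :=
  div_pos (one_sub_pow_pos hq0 hq1 m) (by linarith)

lemma qfact_pos (hq0 : 0 < q) (hq1 : q < 1) (n : ℕ) : 0 < qfact q n :=
  Finset.prod_pos fun i _ => qnum_pos hq0 hq1 i

lemma qfact_zero : qfact q 0 = 1 := by simp [qfact]

lemma qbinom_zero (hq0 : 0 < q) (hq1 : q < 1) (n : ℕ) : qbinom q n 0 = 1 := by
  simp [qbinom, qfact_zero]
  exact (qfact_pos hq0 hq1 n).ne'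

lemma qbinom_self (hq0 : 0 < q) (hq1 : q < 1) (n : ℕ) : qbinom q n n = 1 := by
  simp [qbinom, qfact_zero]
  exact (qfact_pos hq0 hq1 n).ne'

lemma pascal (hq0 : 0 < q) (hq1 : q < 1) (k m : ℕ) :
    qbinom q (k + m + 2) (k + 1)
      = qbinom q (k + m + 1) (k + 1) + q ^ (m + 1) * qbinom q (k + m + 1) k := by
  have e1 : k + m + 2 - (k + 1) = m + 1 := by omega
  have e2 : k + m + 1 - (k + 1) = m := by omega
  have e3 : k + m + 1 - k = m + 1 := by omega
  unfold qbinom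
  rw [e1, e2, e3]
  have hf : ∀ j : ℕ, qfact q (j + 1) = qfact q j * qnum q (j + 1) := fun j =>
    Finset.prod_range_succ _ j
  have h2 : k + m + 2 = (k + m + 1) + 1 := by ring
  rw [h2, hf (k + m + 1), hf k, hf m]
  have hfk := (qfact_pos hq0 hq1 k).ne'
  have hfm := (qfact_pos hq0 hq1 m).ne'
  have hfn := (qfact_pos hq0 hq1 (k + m + 1)).ne'
  have hA := (one_sub_pow_pos hq0 hq1 k).ne'
  have hB := (one_sub_pow_pos hq0 hq1 m).ne'
  have hC := (one_sub_pow_pos hq0 hq1 (k + m + 1)).ne'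
  have hq : (1 : ℝ) - q ≠ 0 := by linarith
  unfold qnum
  rw [div_eq_iff (mul_ne_zero (mul_ne_zero hfk (div_ne_zero hA hq)) (mul_ne_zero hfm (div_ne_zero hB hq)))]
  field_simp
  ring

lemma one_sub_xq_pos (hq0 : 0 < q) (hq1 : q < 1) (hx0 : 0 < x) (hx1 : x < 1) (k : ℕ) :
    0 < 1 - x * q ^ k := by
  have h1 : q ^ k ≤ 1 := pow_le_one₀ hq0.le hq1.le
  nlinarith

lemma core (hq0 : 0 < q) (hq1 : q < 1) (n : ℕ) :
    ∀ x : ℝ, 0 < x → x < 1 →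
    ∑ k ∈ Finset.range (n + 1),
        (-1 : ℝ) ^ k * qbinom q n k * q ^ ((k + 1).choose 2) / (1 - x * q ^ k)
      = (∏ i ∈ Finset.range n, (1 - q ^ (i + 1))) / ∏ i ∈ Finset.range (n + 1), (1 - x * q ^ i) := by
  induction n with
  | zero =>
    intro x hx0 hx1
    simp [qbinom_zero hq0 hq1]
  | succ n ih =>
    intro x hx0 hx1
    set F : ℕ → ℝ := fun k =>
      (-1 : ℝ) ^ k * qbinom q (n + 1) k * q ^ ((k + 1).choose 2) / (1 - x * q ^ k) with hF
    set A : ℕ → ℝ := fun k =>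
      (-1 : ℝ) ^ k * qbinom q n k * q ^ ((k + 1).choose 2) / (1 - x * q ^ k) with hA
    set B : ℕ → ℝ := fun k =>
      -(q ^ (n + 1) *
        ((-1 : ℝ) ^ k * qbinom q n k * q ^ ((k + 1).choose 2) / (1 - x * q * q ^ k))) with hB
    have hne : ∀ k : ℕ, (1 : ℝ) - x * q ^ k ≠ 0 := by
      intro k; exact (one_sub_xq_pos hq0 hq1 hx0 hx1 k).ne'
    have hchoose : ∀ j : ℕ, (j + 2).choose 2 = (j + 1) + (j + 1).choose 2 := by
      intro j
      rw [Nat.choose_succ_succ, Nat.choose_one_right]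
    have hF0 : F 0 = A 0 := by
      simp [hF, hA, qbinom_zero hq0 hq1]
    have hFn : F (n + 1) = B n := by
      simp only [hF, hB, qbinom_self hq0 hq1, hchoose n]
      have hxq : x * q * q ^ n = x * q ^ (n + 1) := by ring
      rw [hxq, pow_add, pow_succ]
      field_simp
      ring
    have hmid : ∀ k, k < n → F (k + 1) = A (k + 1) + B k := by
      intro k hk
      obtain ⟨m, rfl⟩ : ∃ m, n = k + m + 1 := ⟨n - k - 1, by omega⟩
      simp only [hF, hA, hB]
      have hp : qbinom q (k + m + 1 + 1) (k + 1)
          = qbinom q (k + m + 1) (k + 1) + q ^ (m + 1) * qbinom q (k + m + 1) k := by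
        have := pascal hq0 hq1 k m
        convert this using 3 <;> omega
      rw [hp, hchoose k]
      have hxq : x * q * q ^ k = x * q ^ (k + 1) := by ring
      rw [hxq]
      field_simp
      ring
    have key : ∑ k ∈ Finset.range (n + 2), F k
        = ∑ k ∈ Finset.range (n + 1), A k + ∑ k ∈ Finset.range (n + 1), B k := by
      rw [Finset.sum_range_succ' F (n + 1), Finset.sum_range_succ (fun i => F (i + 1)) n,
        Finset.sum_range_succ' A n, Finset.sum_range_succ B n]
      have : ∑ i ∈ Finset.range n, F (i + 1) = ∑ i ∈ Finset.range n, (A (i + 1) + B i) :=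
        Finset.sum_congr rfl fun i hi => hmid i (Finset.mem_range.mp hi)
      rw [this, Finset.sum_add_distrib, hF0, hFn]
      ring
    have hsB : ∑ k ∈ Finset.range (n + 1), B k
        = -(q ^ (n + 1) * ∑ k ∈ Finset.range (n + 1),
            (-1 : ℝ) ^ k * qbinom q n k * q ^ ((k + 1).choose 2) / (1 - x * q * q ^ k)) := by
      rw [Finset.mul_sum, ← Finset.sum_neg_distrib]
    have hxq0 : 0 < x * q := mul_pos hx0 hq0
    have hxq1 : x * q < 1 := by nlinarith
    rw [show n + 1 + 1 = n + 2 from rfl] at *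
    rw [key, ih x hx0 hx1, hsB, ih (x * q) hxq0 hxq1]
    -- now pure algebra
    set M : ℝ := ∏ i ∈ Finset.range n, (1 - x * q ^ (i + 1)) with hM
    set P : ℝ := ∏ i ∈ Finset.range n, (1 - q ^ (i + 1)) with hP
    have hshift : ∀ i : ℕ, 1 - x * q * q ^ i = 1 - x * q ^ (i + 1) := by
      intro i; ring
    have hD : ∏ i ∈ Finset.range (n + 1), (1 - x * q ^ i) = (1 - x) * M := by
      rw [Finset.prod_range_succ']
      simp [hM, mul_comm]
    have hE : ∏ i ∈ Finset.range (n + 1), (1 - x * q * q ^ i) = M * (1 - x * q ^ (n + 1)) := by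
      rw [Finset.prod_range_succ]
      congr 1
      · exact Finset.prod_congr rfl fun i _ => hshift i
      · rw [hshift n]
    have hD' : ∏ i ∈ Finset.range (n + 2), (1 - x * q ^ i)
        = (1 - x) * M * (1 - x * q ^ (n + 1)) := by
      rw [Finset.prod_range_succ, hD]
    have hP' : ∏ i ∈ Finset.range (n + 1), (1 - q ^ (i + 1)) = P * (1 - q ^ (n + 1)) := by
      rw [Finset.prod_range_succ]
    rw [hD, hE, hD', hP']
    have hMne : M ≠ 0 := by
      have : 0 < M := Finset.prod_pos fun i _ => one_sub_xq_pos hq0 hq1 hx0 hx1 (i + 1)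
      exact this.ne'
    have h1x : (1 : ℝ) - x ≠ 0 := by linarith
    have h1xq : (1 : ℝ) - x * q ^ (n + 1) ≠ 0 := hne (n + 1)
    field_simp
    ring

/-- `Σ_{k=0}^{n} (-1)^k [n choose k]_q q^{binom(k+1,2) + ny} [y]_q/[y+k]_q
    = q^{ny} [n]_q! / ([y+1]_q [y+2]_q ⋯ [y+n]_q)`. -/
theorem stmt4 (q : ℝ) (hq0 : 0 < q) (hq1 : q < 1) (y : ℝ) (hy : 0 < y) (n : ℕ) :
    ∑ k ∈ Finset.range (n + 1),
        (-1 : ℝ) ^ k * qbinom q n k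
          * q ^ ((((k + 1).choose 2 : ℕ) : ℝ) + (n : ℝ) * y)
          * (qnumR q y / qnumR q (y + (k : ℝ)))
      = q ^ ((n : ℝ) * y) * (qfact q n / ∏ i ∈ Finset.range n, qnumR q (y + ((i : ℝ) + 1))) := by
  have hx0 : 0 < q ^ y := Real.rpow_pos_of_pos hq0 y
  have hx1 : q ^ y < 1 := Real.rpow_lt_one hq0.le hq1 hy
  set x := q ^ y with hxdef
  have hq : (1 : ℝ) - q ≠ 0 := by linarith
  have hqn : ∀ k : ℕ, (1 : ℝ) - x * q ^ k ≠ 0 := by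
    intro k; exact (one_sub_xq_pos hq0 hq1 hx0 hx1 k).ne'
  have hny : q ^ ((n : ℝ) * y) = x ^ n := by
    rw [mul_comm (n : ℝ) y, Real.rpow_mul hq0.le, Real.rpow_natCast]
  have hpow : ∀ k : ℕ,
      q ^ ((((k + 1).choose 2 : ℕ) : ℝ) + (n : ℝ) * y) = q ^ ((k + 1).choose 2) * x ^ n := by
    intro k
    rw [Real.rpow_add hq0, Real.rpow_natCast, hny]
  have hqnum : ∀ k : ℕ, qnumR q (y + (k : ℝ)) = (1 - x * q ^ k) / (1 - q) := by
    intro k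
    unfold qnumR
    rw [Real.rpow_add hq0, Real.rpow_natCast, hxdef]
  have hterm : ∀ k ∈ Finset.range (n + 1),
      (-1 : ℝ) ^ k * qbinom q n k
          * q ^ ((((k + 1).choose 2 : ℕ) : ℝ) + (n : ℝ) * y)
          * (qnumR q y / qnumR q (y + (k : ℝ)))
        = x ^ n * (1 - x) *
          ((-1 : ℝ) ^ k * qbinom q n k * q ^ ((k + 1).choose 2) / (1 - x * q ^ k)) := by
    intro k _
    rw [hpow k, hqnum k]
    have h0 : qnumR q y = (1 - x) / (1 - q) := by
      unfold qnumR; rw [hxdef]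
    rw [h0, div_div_div_comm, div_self hq, div_one]
    ring
  rw [Finset.sum_congr rfl hterm, ← Finset.mul_sum, core hq0 hq1 n x hx0 hx1, hny]
  have hqfact : qfact q n = (∏ i ∈ Finset.range n, (1 - q ^ (i + 1))) / (1 - q) ^ n := by
    unfold qfact qnum
    rw [Finset.prod_div_distrib, Finset.prod_const, Finset.card_range]
  have hprodR : ∏ i ∈ Finset.range n, qnumR q (y + ((i : ℝ) + 1))
      = (∏ i ∈ Finset.range n, (1 - x * q ^ (i + 1))) / (1 - q) ^ n := by
    have : ∀ i ∈ Finset.range n, qnumR q (y + ((i : ℝ) + 1)) = (1 - x * q ^ (i + 1)) / (1 - q) := by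
      intro i _
      have hc : ((i : ℝ) + 1) = (((i + 1 : ℕ) : ℝ)) := by push_cast; ring
      rw [hc, hqnum (i + 1)]
    rw [Finset.prod_congr rfl this, Finset.prod_div_distrib, Finset.prod_const, Finset.card_range]
  rw [hqfact, hprodR, Finset.prod_range_succ']
  simp only [pow_zero, mul_one]
  have hMpos : 0 < ∏ i ∈ Finset.range n, (1 - x * q ^ (i + 1)) :=
    Finset.prod_pos fun i _ => one_sub_xq_pos hq0 hq1 hx0 hx1 (i + 1)
  have h1x : (1 : ℝ) - x ≠ 0 := by linarith
  have hqp : ((1 : ℝ) - q) ^ n ≠ 0 := pow_ne_zero n hq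
  field_simp
end
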